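/- Let H be a complex Hilbert space and let f : H → H be a bounded (continuous) linear operator of finite rank, i.e. with finite-dimensional range. Then there exists a bounded linear operator g : H → H of finite rank such that f ∘ g ∘ f = f, g ∘ f ∘ g = g, and both f ∘ g and g ∘ f are self-adjoint; that is, the Moore–Penrose inverse of a finite-rank operator exists and is again of finite rank. -/

import Mathlib

open ContinuousLinearMap

local notation "⟪" x ", " y "⟫" => @inner ℂ _ _ x y

/-- Every finite-rank bounded operator on a complex Hilbert space has
a Moore–Penrose inverse, which is again of finite rank. -/
theorem finite_rank_moore_penrose {H : Type*}
    [NormedAddCommGroup H] [InnerProductSpace ℂ H] [CompleteSpace H]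
    (f : H →L[ℂ] H) (hf : FiniteDimensional ℂ (LinearMap.range (f : H →ₗ[ℂ] H))) :
    ∃ g : H →L[ℂ] H, FiniteDimensional ℂ (LinearMap.range (g : H →ₗ[ℂ] H)) ∧
      f.comp (g.comp f) = f ∧ g.comp (f.comp g) = g ∧
      ContinuousLinearMap.adjoint (f.comp g) = f.comp g ∧
      ContinuousLinearMap.adjoint (g.comp f) = g.comp f := by
  set K : Submodule ℂ H := LinearMap.range (f : H →ₗ[ℂ] H) with hK
  haveI : FiniteDimensional ℂ K := hf
  haveI : CompleteSpace K := FiniteDimensional.complete ℂ K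
  set fs := ContinuousLinearMap.adjoint f with hfs
  have hmem : ∀ x : K, f (fs (x : H)) ∈ K := fun x => LinearMap.mem_range_self _ _
  set T : K →L[ℂ] K := ((f.comp fs).comp K.subtypeL).codRestrict K hmem with hT
  have hTcoe : ∀ x : K, (T x : H) = f (fs (x : H)) := fun x => rfl
  -- fs is injective on K
  have hfs_inj : ∀ x : K, fs (x : H) = 0 → x = 0 := by
    intro x hx
    obtain ⟨y, hy⟩ := x.2
    have h0 : ⟪(x : H), (x : H)⟫ = 0 := by
      nth_rewrite 1 [← hy]
      rw [ContinuousLinearMap.coe_coe, ← ContinuousLinearMap.adjoint_inner_right f y (x : H), ← hfs, hx, inner_zero_right]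
    exact Subtype.ext (inner_self_eq_zero.mp h0)
  -- T is injective
  have hT_inj : Function.Injective T := by
    rw [injective_iff_map_eq_zero]
    intro x hx
    have hx' : f (fs (x : H)) = 0 := by rw [← hTcoe x, hx]; rfl
    have h1 : ⟪fs (x : H), fs (x : H)⟫ = 0 := by
      rw [hfs, ContinuousLinearMap.adjoint_inner_left f (fs (x : H)) (x : H), hx',
        inner_zero_right]
    exact hfs_inj x (inner_self_eq_zero.mp h1)
  have hT_surj : Function.Surjective T :=
    (LinearMap.injective_iff_surjective (f := (T : K →ₗ[ℂ] K))).mp hT_inj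
  set e : K ≃ₗ[ℂ] K := LinearEquiv.ofBijective (T : K →ₗ[ℂ] K) ⟨hT_inj, hT_surj⟩ with he
  set Tinv : K →L[ℂ] K := LinearMap.toContinuousLinearMap (e.symm : K →ₗ[ℂ] K) with hTinv
  have hTTinv : ∀ y : K, T (Tinv y) = y := fun y => e.apply_symm_apply y
  have hTinvT : ∀ y : K, Tinv (T y) = y := fun y => e.symm_apply_apply y
  set P : H →L[ℂ] K := K.orthogonalProjectionOnto with hP
  have hPself : ∀ (v : H) (hv : v ∈ K), P v = ⟨v, hv⟩ := by
    intro v hv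
    exact Subtype.ext (Submodule.starProjection_eq_self_iff.mpr hv)
  set A : K →L[ℂ] H := fs.comp (K.subtypeL.comp Tinv) with hA
  set g : H →L[ℂ] H := A.comp P with hg
  have hgapp : ∀ x : H, g x = fs ((Tinv (P x) : K) : H) := fun x => rfl
  -- key identity : f (fs (Tinv y)) = y
  have key1 : ∀ y : K, f (fs ((Tinv y : K) : H)) = (y : H) := by
    intro y
    rw [← hTcoe (Tinv y), hTTinv y]
  -- f ∘ g = inclusion ∘ P
  have hfg : f.comp g = K.subtypeL.comp P := by
    ext x
    simp only [ContinuousLinearMap.comp_apply, Submodule.subtypeL_apply]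
    rw [hgapp x, key1 (P x)]
  -- symmetry of T and Tinv
  have hTsym : ∀ a b : K, ⟪(T a : K), b⟫ = ⟪a, T b⟫ := by
    intro a b
    rw [Submodule.coe_inner, Submodule.coe_inner, hTcoe a, hTcoe b]
    rw [hfs, ← ContinuousLinearMap.adjoint_inner_right f ((ContinuousLinearMap.adjoint f) (a : H)) (b : H)]
    exact ContinuousLinearMap.adjoint_inner_left f ((ContinuousLinearMap.adjoint f) (b : H)) (a : H)
  have hTinvsym : ∀ a b : K, ⟪(Tinv a : K), b⟫ = ⟪a, Tinv b⟫ := by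
    intro a b
    calc ⟪(Tinv a : K), b⟫ = ⟪(Tinv a : K), T (Tinv b)⟫ := by rw [hTTinv b]
      _ = ⟪(T (Tinv a) : K), Tinv b⟫ := (hTsym (Tinv a) (Tinv b)).symm
      _ = ⟪a, (Tinv b : K)⟫ := by rw [hTTinv a]
  refine ⟨g, ?_, ?_, ?_, ?_, ?_⟩
  · -- finite rank of g
    have hle : LinearMap.range (g : H →ₗ[ℂ] H) ≤ LinearMap.range (A : K →ₗ[ℂ] H) := by
      rintro x ⟨y, rfl⟩
      exact ⟨P y, rfl⟩
    exact Submodule.finiteDimensional_of_le hle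
  · -- f g f = f
    ext x
    simp only [ContinuousLinearMap.comp_apply]
    rw [hgapp (f x), hPself (f x) (LinearMap.mem_range_self _ x), key1]
  · -- g f g = g
    ext x
    simp only [ContinuousLinearMap.comp_apply]
    have h1 : f (g x) = ((P x : K) : H) := by rw [hgapp x, key1 (P x)]
    rw [h1, hgapp, hgapp x, hPself ((P x : K) : H) (P x).2]
  · -- (f g)* = f g
    rw [hfg, ← ContinuousLinearMap.star_eq_adjoint]
    exact isSelfAdjoint_starProjection K
  · -- (g f)* = g f
    symm
    rw [ContinuousLinearMap.eq_adjoint_iff]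
    intro x y
    have hx : P (f x) = ⟨f x, LinearMap.mem_range_self _ x⟩ := hPself _ _
    have hy : P (f y) = ⟨f y, LinearMap.mem_range_self _ y⟩ := hPself _ _
    calc ⟪(g.comp f) x, y⟫ = ⟪fs ((Tinv (P (f x)) : K) : H), y⟫ := rfl
      _ = ⟪((Tinv (P (f x)) : K) : H), f y⟫ := by
          rw [hfs]; exact ContinuousLinearMap.adjoint_inner_left f y _
      _ = ⟪(Tinv (P (f x)) : K), P (f y)⟫ := by
          rw [Submodule.coe_inner, hy]
      _ = ⟪(P (f x) : K), Tinv (P (f y))⟫ := hTinvsym _ _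
      _ = ⟪f x, ((Tinv (P (f y)) : K) : H)⟫ := by
          rw [Submodule.coe_inner, hx]
      _ = ⟪x, fs ((Tinv (P (f y)) : K) : H)⟫ := by
          rw [hfs]; exact (ContinuousLinearMap.adjoint_inner_right f x _).symm
      _ = ⟪x, (g.comp f) y⟫ := rfl
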